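/- The minimum value of the major index over all standard Young tableaux of shape λ ⊢ n equals b(λ) = ∑_{i ≥ 1} (i−1)·λ_i (rows indexed from 1). -/

import Mathlib

/-- A standard Young tableau of shape `μ`: a filling of the cells of `μ`
by `1,…,n` (each exactly once, `n = μ.card`), strictly increasing along
rows and columns. -/
structure SYT (μ : YoungDiagram) where
  entry : ℕ × ℕ → ℕ
  mapsTo : ∀ c ∈ μ.cells, entry c ∈ Finset.Icc 1 μ.card
  injOn : ∀ c ∈ μ.cells, ∀ d ∈ μ.cells, entry c = entry d → c = d
  surjOn : ∀ v ∈ Finset.Icc 1 μ.card, ∃ c ∈ μ.cells, entry c = v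
  row_lt : ∀ {i j1 j2 : ℕ}, j1 < j2 → (i, j2) ∈ μ → entry (i, j1) < entry (i, j2)
  col_lt : ∀ {i1 i2 j : ℕ}, i1 < i2 → (i2, j) ∈ μ → entry (i1, j) < entry (i2, j)

/-- `i` is a descent of the tableau `T`: the entry `i+1` lies in a strictly
lower row than the entry `i`. -/
def SYT.des {μ : YoungDiagram} (T : SYT μ) (i : ℕ) : Prop :=
  ∃ c ∈ μ.cells, ∃ d ∈ μ.cells, T.entry c = i ∧ T.entry d = i + 1 ∧ c.1 < d.1

open scoped Classical in
/-- The major index of a standard Young tableau: the sum of its descents. -/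
noncomputable def SYT.maj {μ : YoungDiagram} (T : SYT μ) : ℕ :=
  ∑ i ∈ Finset.range μ.card, if T.des i then i else 0

/-- `bstat μ = ∑ (i-1) μ_i` (rows 1-indexed), i.e. `∑ i * μ.rowLen i` with rows 0-indexed. -/
def bstat (μ : YoungDiagram) : ℕ :=
  ∑ i ∈ Finset.range μ.card, i * μ.rowLen i

/-- The number of columns of `μ` of odd length. -/
def oddCols (μ : YoungDiagram) : ℕ :=
  ((Finset.range μ.card).filter fun j => Odd (μ.colLen j)).card

open Finset

namespace YD
variable (μ : YoungDiagram)

/-- cells of rows `≥ t`, counted. -/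
def S (t : ℕ) : ℕ := ∑ j ∈ Finset.Ico t μ.card, μ.rowLen j

variable {μ}

lemma rowLen_pos_iff {t : ℕ} : 0 < μ.rowLen t ↔ t < μ.colLen 0 := by
  rw [← YoungDiagram.mem_iff_lt_colLen, YoungDiagram.mem_iff_lt_rowLen]

lemma colLen0_le_card : μ.colLen 0 ≤ μ.card := by
  rw [YoungDiagram.colLen_eq_card]
  apply Finset.card_le_card
  intro p hp
  exact (YoungDiagram.mem_cells _).2 ((YoungDiagram.mem_col_iff.1 hp).1)

lemma rowLen_eq_zero {t : ℕ} (h : μ.card ≤ t) : μ.rowLen t = 0 := by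
  by_contra hne
  have := rowLen_pos_iff.1 (Nat.pos_of_ne_zero hne)
  exact absurd (lt_of_lt_of_le this colLen0_le_card) (not_lt.2 h)

lemma S_succ (t : ℕ) : S μ t = μ.rowLen t + S μ (t + 1) := by
  rcases lt_or_ge t μ.card with h | h
  · rw [S, Finset.sum_eq_sum_Ico_succ_bot h]; rfl
  · rw [S, S, Finset.Ico_eq_empty (by omega), Finset.Ico_eq_empty (by omega)]
    simp [rowLen_eq_zero h]

lemma S_anti {a b : ℕ} (h : a ≤ b) : S μ b ≤ S μ a := by
  apply Finset.sum_le_sum_of_subset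
  apply Finset.Ico_subset_Ico h le_rfl

lemma S_lt_S {a b : ℕ} (h : a < b) (hpos : 0 < μ.rowLen a) : S μ b < S μ a := by
  have h1 : S μ b ≤ S μ (a+1) := S_anti h
  have := S_succ (μ := μ) a
  omega

/-- decompose a sum over cells into rows -/
lemma sum_cells (f : ℕ × ℕ → ℕ) {N : ℕ} (hN : μ.colLen 0 ≤ N) :
    ∑ p ∈ μ.cells, f p = ∑ i ∈ Finset.range N, ∑ p ∈ μ.row i, f p := by
  rw [← Finset.sum_biUnion]
  · congr 1
    ext p
    simp only [Finset.mem_biUnion, Finset.mem_range, YoungDiagram.mem_row_iff,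
      YoungDiagram.mem_cells]
    constructor
    · intro hp
      refine ⟨p.1, ?_, hp, rfl⟩
      have : (p.1, 0) ∈ μ := μ.up_left_mem le_rfl (Nat.zero_le _) (by simpa using hp)
      have := YoungDiagram.mem_iff_lt_colLen.1 this
      omega
    · rintro ⟨i, _, hp, _⟩; exact hp
  · intro a _ b _ hab
    simp only [Finset.disjoint_left, YoungDiagram.mem_row_iff]
    rintro p ⟨_, h1⟩ ⟨_, h2⟩
    exact hab (h1 ▸ h2 ▸ rfl)

lemma sum_row (f : ℕ × ℕ → ℕ) (i : ℕ) : ∑ p ∈ μ.row i, f p = ∑ j ∈ Finset.range (μ.rowLen i), f (i, j) := by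
  rw [YoungDiagram.row_eq_prod, Finset.sum_product]
  simp

lemma card_eq_S_zero : μ.card = S μ 0 := by
  have : μ.card = ∑ p ∈ μ.cells, 1 := by simp
  rw [this, sum_cells (fun _ => 1) (le_refl (μ.colLen 0)), S]
  rcases le_or_gt (μ.colLen 0) μ.card with h | h
  · rw [Finset.range_eq_Ico]
    rw [← Finset.sum_Ico_consecutive _ (Nat.zero_le (μ.colLen 0)) h]
    have h2 : ∑ j ∈ Finset.Ico (μ.colLen 0) μ.card, μ.rowLen j = 0 := by
      apply Finset.sum_eq_zero
      intro j hj
      simp only [Finset.mem_Ico] at hj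
      by_contra hne
      have := rowLen_pos_iff.1 (Nat.pos_of_ne_zero hne)
      omega
    rw [h2]
    simp only [add_zero]
    apply Finset.sum_congr rfl
    intro i _
    rw [sum_row (fun _ => 1)]
    simp
  · exact absurd colLen0_le_card (not_le.2 h)

lemma bstat_eq_sum_fst : (∑ i ∈ Finset.range μ.card, i * μ.rowLen i) = ∑ p ∈ μ.cells, p.1 := by
  rw [sum_cells (fun p => p.1) colLen0_le_card]
  apply Finset.sum_congr rfl
  intro i _
  rw [sum_row (fun p => p.1)]
  simp [mul_comm]

end YD

namespace YD
variable {μ : YoungDiagram}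

/-- entry of the min-maj tableau -/
def entryF (μ : YoungDiagram) (p : ℕ × ℕ) : ℕ := p.2 + 1 + S μ (μ.colLen p.2 - p.1)

lemma mem_t {r c : ℕ} (h : (r, c) ∈ μ) :
    1 ≤ μ.colLen c - r ∧ μ.colLen c - r ≤ μ.colLen c := by
  have := YoungDiagram.mem_iff_lt_colLen.1 h
  omega

lemma c_lt_rowLen {r c : ℕ} (h : (r, c) ∈ μ) : c < μ.rowLen (μ.colLen c - r - 1) := by
  have hr := YoungDiagram.mem_iff_lt_colLen.1 h
  have : (μ.colLen c - r - 1, c) ∈ μ := YoungDiagram.mem_iff_lt_colLen.2 (by omega)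
  exact YoungDiagram.mem_iff_lt_rowLen.1 this

lemma entryF_bounds {r c : ℕ} (h : (r, c) ∈ μ) :
    S μ (μ.colLen c - r) < entryF μ (r, c) ∧ entryF μ (r, c) ≤ S μ (μ.colLen c - r - 1) := by
  have h1 := c_lt_rowLen h
  have h2 := mem_t h
  have h3 := S_succ (μ := μ) (μ.colLen c - r - 1)
  have h4 : μ.colLen c - r - 1 + 1 = μ.colLen c - r := by omega
  rw [h4] at h3
  simp only [entryF]
  omega

lemma t_unique {a b v : ℕ} (ha : 1 ≤ a) (hb : 1 ≤ b) (h1 : S μ a < v) (h2 : v ≤ S μ (a-1))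
    (h3 : S μ b < v) (h4 : v ≤ S μ (b-1)) : a = b := by
  by_contra hne
  rcases lt_or_gt_of_ne hne with h | h
  · have : S μ (b-1) ≤ S μ a := S_anti (by omega)
    omega
  · have : S μ (a-1) ≤ S μ b := S_anti (by omega)
    omega

lemma exists_t {v : ℕ} (h1 : 1 ≤ v) (h2 : v ≤ μ.card) :
    ∃ t, 1 ≤ t ∧ S μ t < v ∧ v ≤ S μ (t-1) := by
  have hex : ∃ t, S μ t < v := ⟨μ.card, by simp [S]; omega⟩
  refine ⟨Nat.find hex, ?_, Nat.find_spec hex, ?_⟩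
  · rcases Nat.eq_zero_or_pos (Nat.find hex) with h | h
    · have := Nat.find_spec hex
      rw [h] at this
      rw [← card_eq_S_zero] at this
      omega
    · exact h
  · have h3 : 0 < Nat.find hex := by
      rcases Nat.eq_zero_or_pos (Nat.find hex) with h | h
      · have := Nat.find_spec hex
        rw [h, ← card_eq_S_zero] at this
        omega
      · exact h
    have := Nat.find_min hex (m := Nat.find hex - 1) (by omega)
    omega

/-- The entry map determines the cell. -/
lemma entryF_inj {p q : ℕ × ℕ} (hp : p ∈ μ) (hq : q ∈ μ) (h : entryF μ p = entryF μ q) : p = q := by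
  obtain ⟨r, c⟩ := p
  obtain ⟨r', c'⟩ := q
  have b1 := entryF_bounds hp
  have b2 := entryF_bounds hq
  have ht1 := mem_t hp
  have ht2 := mem_t hq
  have hteq : μ.colLen c - r = μ.colLen c' - r' :=
    t_unique ht1.1 ht2.1 b1.1 (h ▸ b1.2) (h ▸ b2.1) (h ▸ b2.2)
  simp only [entryF] at h
  rw [hteq] at h
  have hc : c = c' := by omega
  subst hc
  have hr1 := YoungDiagram.mem_iff_lt_colLen.1 hp
  have hr2 := YoungDiagram.mem_iff_lt_colLen.1 hq
  have : r = r' := by omega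
  simp [this]

noncomputable def Tmin (μ : YoungDiagram) : SYT μ where
  entry := entryF μ
  mapsTo := by
    rintro ⟨r, c⟩ hp
    rw [YoungDiagram.mem_cells] at hp
    have b := entryF_bounds hp
    have h1 : S μ (μ.colLen c - r - 1) ≤ S μ 0 := S_anti (Nat.zero_le _)
    rw [← card_eq_S_zero] at h1
    simp only [Finset.mem_Icc, entryF] at *
    omega
  injOn := by
    intro p hp q hq h
    exact entryF_inj ((YoungDiagram.mem_cells _).1 hp) ((YoungDiagram.mem_cells _).1 hq) h
  surjOn := by
    intro v hv
    simp only [Finset.mem_Icc] at hv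
    obtain ⟨t, ht1, ht2, ht3⟩ := exists_t hv.1 hv.2
    have hS := S_succ (μ := μ) (t - 1)
    have h4 : t - 1 + 1 = t := by omega
    rw [h4] at hS
    set c := v - 1 - S μ t with hc
    have hcr : c < μ.rowLen (t - 1) := by omega
    have hmem : (t - 1, c) ∈ μ := YoungDiagram.mem_iff_lt_rowLen.2 hcr
    have hcl : t ≤ μ.colLen c := by
      have := YoungDiagram.mem_iff_lt_colLen.1 hmem
      omega
    refine ⟨(μ.colLen c - t, c), ?_, ?_⟩
    · rw [YoungDiagram.mem_cells]
      exact YoungDiagram.mem_iff_lt_colLen.2 (by omega)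
    · simp only [entryF]
      have : μ.colLen c - (μ.colLen c - t) = t := by omega
      rw [this]
      omega
  row_lt := by
    intro i j1 j2 hj h2
    have h1 : (i, j1) ∈ μ := μ.up_left_mem le_rfl (le_of_lt hj) h2
    have hc : μ.colLen j2 ≤ μ.colLen j1 := μ.colLen_anti _ _ (le_of_lt hj)
    have hS : S μ (μ.colLen j1 - i) ≤ S μ (μ.colLen j2 - i) := S_anti (by omega)
    simp only [entryF]
    omega
  col_lt := by
    intro i1 i2 j h12 h2
    have h1 : (i1, j) ∈ μ := μ.up_left_mem (le_of_lt h12) le_rfl h2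
    have hcl := YoungDiagram.mem_iff_lt_colLen.1 h2
    have hlt : S μ (μ.colLen j - i1) < S μ (μ.colLen j - i2) := by
      apply S_lt_S (by omega)
      apply rowLen_pos_iff.2
      have : μ.colLen j ≤ μ.colLen 0 := μ.colLen_anti _ _ (Nat.zero_le _)
      omega
    simp only [entryF]
    omega

end YD
namespace YD
variable {μ : YoungDiagram}

lemma S_pos_rowLen {t : ℕ} (h : 1 ≤ S μ t) : 0 < μ.rowLen t := by
  by_contra hz
  have ht : μ.colLen 0 ≤ t := by
    by_contra hlt
    exact hz (rowLen_pos_iff.2 (by omega))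
  have : S μ t = 0 := by
    apply Finset.sum_eq_zero
    intro j hj
    simp only [Finset.mem_Ico] at hj
    by_contra hne
    have := rowLen_pos_iff.1 (Nat.pos_of_ne_zero hne)
    omega
  omega

lemma des_Tmin_forward {i : ℕ} (h : (Tmin μ).des i) : ∃ t, 1 ≤ t ∧ i = S μ t := by
  obtain ⟨p, hp, q, hq, hip, hiq, hlt⟩ := h
  rw [YoungDiagram.mem_cells] at hp hq
  obtain ⟨r, c⟩ := p
  obtain ⟨r', c'⟩ := q
  have b1 := entryF_bounds hp
  have b2 := entryF_bounds hq
  have ht1 := mem_t hp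
  have ht2 := mem_t hq
  simp only [Tmin] at hip hiq
  rw [hip] at b1
  rw [hiq] at b2
  have hS0 : S μ (μ.colLen c' - r' - 1) ≤ S μ 0 := S_anti (Nat.zero_le _)
  rw [← card_eq_S_zero] at hS0
  rcases le_or_gt (i + 1) (S μ (μ.colLen c - r - 1)) with hcase | hcase
  · exfalso
    have hteq : μ.colLen c' - r' = μ.colLen c - r :=
      t_unique ht2.1 ht1.1 b2.1 b2.2 (by omega) hcase
    simp only [entryF] at hip hiq
    rw [hteq] at hiq
    have hc' : c' = c + 1 := by omega
    have hcc : μ.colLen c' ≤ μ.colLen c := μ.colLen_anti _ _ (by omega)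
    have hr1 := YoungDiagram.mem_iff_lt_colLen.1 hp
    have hr2 := YoungDiagram.mem_iff_lt_colLen.1 hq
    omega
  · -- i = S (t-1)
    have hieq : i = S μ (μ.colLen c - r - 1) := by omega
    refine ⟨μ.colLen c - r - 1, ?_, hieq⟩
    -- if t = 1 then i = S 0 = card, contradiction with i+1 ≤ card
    by_contra hone
    have h0 : μ.colLen c - r - 1 = 0 := by omega
    rw [h0, ← card_eq_S_zero] at hieq
    omega

lemma des_Tmin_reverse {t : ℕ} (ht : 1 ≤ t) (hS : 1 ≤ S μ t) : (Tmin μ).des (S μ t) := by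
  have hrt : 0 < μ.rowLen t := S_pos_rowLen hS
  set c := μ.rowLen t - 1 with hc
  have htc : (t, c) ∈ μ := YoungDiagram.mem_iff_lt_rowLen.2 (by omega)
  have hcl : t + 1 ≤ μ.colLen c := YoungDiagram.mem_iff_lt_colLen.1 htc
  have ht0 : (t, 0) ∈ μ := μ.up_left_mem le_rfl (Nat.zero_le _) htc
  have hcl0 : t + 1 ≤ μ.colLen 0 := YoungDiagram.mem_iff_lt_colLen.1 ht0
  have hcc : μ.colLen c ≤ μ.colLen 0 := μ.colLen_anti _ _ (Nat.zero_le _)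
  refine ⟨(μ.colLen c - (t+1), c), ?_, (μ.colLen 0 - t, 0), ?_, ?_, ?_, ?_⟩
  · rw [YoungDiagram.mem_cells]
    exact YoungDiagram.mem_iff_lt_colLen.2 (by omega)
  · rw [YoungDiagram.mem_cells]
    exact YoungDiagram.mem_iff_lt_colLen.2 (by omega)
  · show entryF μ _ = _
    simp only [entryF]
    have h1 : μ.colLen c - (μ.colLen c - (t+1)) = t + 1 := by omega
    rw [h1]
    have := S_succ (μ := μ) t
    omega
  · show entryF μ _ = _
    simp only [entryF]
    have h1 : μ.colLen 0 - (μ.colLen 0 - t) = t := by omega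
    rw [h1]
    omega
  · show μ.colLen c - (t+1) < μ.colLen 0 - t
    omega

lemma sum_S_eq_bstat : ∑ t ∈ Finset.Icc 1 μ.card, S μ t = bstat μ := by
  rw [bstat]
  simp only [S]
  rw [Finset.sum_comm' (t' := Finset.range μ.card) (s' := fun j => Finset.Icc 1 j)]
  · apply Finset.sum_congr rfl
    intro j _
    rw [Finset.sum_const, Nat.card_Icc]
    simp [mul_comm]
  · intro x y
    simp only [Finset.mem_Icc, Finset.mem_Ico, Finset.mem_range]
    omega

theorem maj_Tmin : (Tmin μ).maj = bstat μ := by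
  classical
  rw [SYT.maj]
  rw [← Finset.sum_filter]
  have himg : (Finset.range μ.card).filter (Tmin μ).des
      = ((Finset.Icc 1 μ.card).filter (fun t => 1 ≤ S μ t)).image (S μ) := by
    ext i
    simp only [Finset.mem_filter, Finset.mem_image, Finset.mem_range, Finset.mem_Icc]
    constructor
    · rintro ⟨hin, hdes⟩
      obtain ⟨t, ht, hieq⟩ := des_Tmin_forward hdes
      have hi1 : 1 ≤ i := by
        obtain ⟨p, hp, _, _, hip, _⟩ := hdes
        simp only [Tmin, entryF] at hip
        omega
      have hrt : 0 < μ.rowLen t := S_pos_rowLen (by omega)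
      have : t < μ.colLen 0 := rowLen_pos_iff.1 hrt
      exact ⟨t, ⟨⟨ht, le_trans (le_of_lt this) colLen0_le_card⟩, by omega⟩, hieq.symm⟩
    · rintro ⟨t, ⟨⟨ht1, _⟩, hS⟩, hieq⟩
      subst hieq
      refine ⟨?_, des_Tmin_reverse ht1 hS⟩
      have hrt : 0 < μ.rowLen t := S_pos_rowLen hS
      have h0 : 0 < μ.rowLen 0 := lt_of_lt_of_le hrt (μ.rowLen_anti _ _ (Nat.zero_le _))
      have h1 : S μ t ≤ S μ 1 := S_anti ht1
      have h2 := S_succ (μ := μ) 0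
      rw [← card_eq_S_zero] at h2
      norm_num at h2
      omega
  rw [himg, Finset.sum_image, Finset.sum_filter]
  · rw [← sum_S_eq_bstat]
    apply Finset.sum_congr rfl
    intro t _
    split <;> omega
  · intro a ha b hb hab
    simp only [Finset.mem_coe, Finset.mem_filter] at ha hb
    by_contra hne
    rcases lt_or_gt_of_ne hne with h | h
    · have := S_lt_S h (S_pos_rowLen ha.2)
      omega
    · have := S_lt_S h (S_pos_rowLen hb.2)
      omega

end YD
namespace YD
variable {μ : YoungDiagram}

noncomputable def cellOf (T : SYT μ) (v : ℕ) : ℕ × ℕ :=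
  if h : v ∈ Finset.Icc 1 μ.card then (T.surjOn v h).choose else (0, 0)

lemma cellOf_spec (T : SYT μ) {v : ℕ} (h : v ∈ Finset.Icc 1 μ.card) :
    cellOf T v ∈ μ.cells ∧ T.entry (cellOf T v) = v := by
  rw [cellOf, dif_pos h]
  obtain ⟨h1, h2⟩ := (T.surjOn v h).choose_spec
  exact ⟨h1, h2⟩

lemma entry_mem (T : SYT μ) {p : ℕ × ℕ} (h : p ∈ μ.cells) :
    1 ≤ T.entry p ∧ T.entry p ≤ μ.card := by
  have := T.mapsTo p h
  simpa using this

lemma row_le_of_no_des (T : SYT μ) : ∀ k a, 1 ≤ a → a + k ≤ μ.card →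
    (∀ d, a ≤ d → d < a + k → ¬ T.des d) → (cellOf T (a + k)).1 ≤ (cellOf T a).1 := by
  intro k
  induction k with
  | zero => intro a _ _ _; exact le_rfl
  | succ k ih =>
    intro a ha hk hno
    have h1 : (cellOf T (a + k)).1 ≤ (cellOf T a).1 :=
      ih a ha (by omega) (fun d hd1 hd2 => hno d hd1 (by omega))
    have hm1 : a + k ∈ Finset.Icc 1 μ.card := by simp; omega
    have hm2 : a + (k + 1) ∈ Finset.Icc 1 μ.card := by simp; omega
    have s1 := cellOf_spec T hm1
    have s2 := cellOf_spec T hm2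
    have hnd := hno (a + k) (by omega) (by omega)
    rw [SYT.des] at hnd
    push_neg at hnd
    have := hnd (cellOf T (a + k)) s1.1 (cellOf T (a + (k + 1))) s2.1 s1.2
      (by rw [s2.2]; omega)
    omega

lemma exists_des_between (T : SYT μ) {p q : ℕ × ℕ} (hp : p ∈ μ.cells) (hq : q ∈ μ.cells)
    (hrow : p.1 < q.1) (hlt : T.entry p < T.entry q) :
    ∃ d, T.des d ∧ T.entry p ≤ d ∧ d < T.entry q := by
  by_contra h
  push_neg at h
  set a := T.entry p with hA
  set b := T.entry q with hB
  have ha := entry_mem T hp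
  have hb := entry_mem T hq
  have hno : ∀ d, a ≤ d → d < b → ¬ T.des d := by
    intro d h1 h2 hdes
    have := h d hdes h1
    omega
  have hrun := row_le_of_no_des T (b - a) a ha.1 (by omega) (by
    intro d h1 h2
    exact hno d h1 (by omega))
  have hab : a + (b - a) = b := by omega
  rw [hab] at hrun
  have hma : a ∈ Finset.Icc 1 μ.card := by simp; omega
  have hmb : b ∈ Finset.Icc 1 μ.card := by simp; omega
  have sa := cellOf_spec T hma
  have sb := cellOf_spec T hmb
  have hpa : cellOf T a = p := T.injOn _ sa.1 _ hp sa.2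
  have hqb : cellOf T b = q := T.injOn _ sb.1 _ hq sb.2
  rw [hpa, hqb] at hrun
  omega

lemma card_le_entries (T : SYT μ) {d : ℕ} (h1 : 1 ≤ d) (h2 : d ≤ μ.card) :
    (μ.cells.filter (fun p => T.entry p ≤ d)).card = d := by
  classical
  have hd : d = (Finset.Icc 1 d).card := by simp
  rw [hd]
  apply Finset.card_bij (fun p _ => T.entry p)
  · intro p hp
    simp only [Finset.mem_filter] at hp
    have := entry_mem T hp.1
    simp only [Finset.mem_Icc]
    omega
  · intro p hp q hq h
    simp only [Finset.mem_filter] at hp hq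
    exact T.injOn p hp.1 q hq.1 h
  · intro v hv
    simp only [Finset.mem_Icc] at hv
    obtain ⟨c, hc, hce⟩ := T.surjOn v (by simp; omega)
    refine ⟨c, ?_, hce⟩
    simp only [Finset.mem_filter]
    exact ⟨hc, by omega⟩

open scoped Classical in
noncomputable def dOf (T : SYT μ) (e : ℕ × ℕ) : ℕ :=
  if h : ∃ d, T.des d ∧ T.entry e ≤ d ∧ d < T.entry (e.1 + 1, e.2) then h.choose else 0

open scoped Classical in
lemma dOf_spec (T : SYT μ) {e : ℕ × ℕ} (he : e ∈ μ.cells) (he2 : (e.1 + 1, e.2) ∈ μ) :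
    T.des (dOf T e) ∧ T.entry e ≤ dOf T e ∧ dOf T e < T.entry (e.1 + 1, e.2) := by
  have hex : ∃ d, T.des d ∧ T.entry e ≤ d ∧ d < T.entry (e.1 + 1, e.2) := by
    apply exists_des_between T he ((YoungDiagram.mem_cells _).2 he2) (by simp)
    exact T.col_lt (by omega) he2
  rw [dOf, dif_pos hex]
  exact hex.choose_spec

lemma bstat_le_maj (T : SYT μ) : bstat μ ≤ T.maj := by
  classical
  set E := μ.cells.filter (fun p => (p.1 + 1, p.2) ∈ μ) with hE
  have hEmem : ∀ e ∈ E, e ∈ μ.cells ∧ (e.1 + 1, e.2) ∈ μ := by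
    intro e he
    simpa [hE] using he
  -- step 1 : bstat = sum over edges
  have h1 : bstat μ = ∑ e ∈ E, (e.1 + 1) := by
    rw [bstat, bstat_eq_sum_fst]
    rw [← Finset.sum_filter_of_ne (p := fun p => 0 < p.1)
      (by intro x _ hx; omega)]
    apply (Finset.sum_nbij' (fun e => (e.1 + 1, e.2)) (fun p => (p.1 - 1, p.2)) ?_ ?_ ?_ ?_ ?_).symm
    · intro e he
      obtain ⟨h1, h2⟩ := hEmem e he
      simp only [Finset.mem_filter]
      exact ⟨(YoungDiagram.mem_cells _).2 h2, by omega⟩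
    · intro p hp
      simp only [Finset.mem_filter, YoungDiagram.mem_cells] at hp
      obtain ⟨hp1, hp2⟩ := hp
      simp only [hE, Finset.mem_filter, YoungDiagram.mem_cells]
      constructor
      · exact μ.up_left_mem (by omega) le_rfl hp1
      · have : (p.1 - 1 + 1, p.2) = p := by
          obtain ⟨a, b⟩ := p; simp at hp2 ⊢; omega
        rw [this]; exact hp1
    · intro e _; simp
    · intro p hp
      simp only [Finset.mem_filter] at hp
      obtain ⟨a, b⟩ := p
      simp at hp ⊢
      omega
    · intro e _; simp
  -- the descent set
  set D := (Finset.range μ.card).filter T.des with hD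
  have hmaps : ∀ e ∈ E, dOf T e ∈ D := by
    intro e he
    obtain ⟨he1, he2⟩ := hEmem e he
    have hs := dOf_spec T he1 he2
    have := (entry_mem T ((YoungDiagram.mem_cells _).2 he2)).2
    simp only [hD, Finset.mem_filter, Finset.mem_range]
    exact ⟨by omega, hs.1⟩
  have h2 : ∑ e ∈ E, (e.1 + 1) = ∑ d ∈ D, ∑ e ∈ E.filter (fun e => dOf T e = d), (e.1 + 1) :=
    (Finset.sum_fiberwise_of_maps_to hmaps _).symm
  -- per-fiber bound
  have h3 : ∀ d ∈ D, ∑ e ∈ E.filter (fun e => dOf T e = d), (e.1 + 1) ≤ d := by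
    intro d hd
    simp only [hD, Finset.mem_filter, Finset.mem_range] at hd
    obtain ⟨hdn, hdes⟩ := hd
    have hd1 : 1 ≤ d := by
      obtain ⟨p, hp, _, _, hep, _⟩ := hdes
      have := (entry_mem T hp).1
      omega
    set F := E.filter (fun e => dOf T e = d) with hF
    have hFmem : ∀ e ∈ F, e ∈ μ.cells ∧ (e.1 + 1, e.2) ∈ μ ∧ dOf T e = d := by
      intro e he
      simp only [hF, hE, Finset.mem_filter, YoungDiagram.mem_cells] at he
      exact ⟨(YoungDiagram.mem_cells _).2 he.1.1, he.1.2, he.2⟩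
    -- two edges in the fiber lie in distinct columns
    have hcol : ∀ x ∈ F, ∀ y ∈ F, x.2 = y.2 → x.1 < y.1 → False := by
      intro x hx y hy hc hlt
      obtain ⟨hx1, hx2, hx3⟩ := hFmem x hx
      obtain ⟨hy1, hy2, hy3⟩ := hFmem y hy
      have sx := dOf_spec T hx1 hx2
      have sy := dOf_spec T hy1 hy2
      have hyμ : (y.1, y.2) ∈ μ := by
        rw [YoungDiagram.mem_cells] at hy1; exact hy1
      have hle : T.entry (x.1 + 1, x.2) ≤ T.entry (y.1, y.2) := by
        rcases eq_or_lt_of_le (show x.1 + 1 ≤ y.1 by omega) with h | h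
        · rw [h, hc]
        · rw [hc]; exact le_of_lt (T.col_lt h hyμ)
      have hey : T.entry (y.1, y.2) = T.entry y := by rfl
      omega
    set g : ℕ × ℕ → Finset (ℕ × ℕ) := fun e => Finset.range (e.1 + 1) ×ˢ {e.2} with hg
    have hdisj : ∀ x ∈ F, ∀ y ∈ F, x ≠ y → Disjoint (g x) (g y) := by
      intro x hx y hy hxy
      have hc : x.2 ≠ y.2 := by
        intro hc
        have : x.1 ≠ y.1 := by
          intro h1
          exact hxy (Prod.ext h1 hc)
        rcases lt_or_gt_of_ne this with h | h
        · exact hcol x hx y hy hc h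
        · exact hcol y hy x hx hc.symm h
      simp only [Finset.disjoint_left, hg, Finset.mem_product, Finset.mem_singleton]
      rintro p ⟨_, hp2⟩ ⟨_, hq2⟩
      exact hc (hp2 ▸ hq2 ▸ rfl)
    have hcard : ∑ e ∈ F, (e.1 + 1) = (F.biUnion g).card := by
      rw [Finset.card_biUnion hdisj]
      apply Finset.sum_congr rfl
      intro e _
      simp [hg]
    have hsub : F.biUnion g ⊆ μ.cells.filter (fun p => T.entry p ≤ d) := by
      intro p hp
      simp only [Finset.mem_biUnion] at hp
      obtain ⟨e, he, hpe⟩ := hp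
      obtain ⟨he1, he2, he3⟩ := hFmem e he
      simp only [hg, Finset.mem_product, Finset.mem_singleton, Finset.mem_range] at hpe
      obtain ⟨hp1, hp2⟩ := hpe
      have heμ : (e.1, e.2) ∈ μ := by rw [YoungDiagram.mem_cells] at he1; exact he1
      have hpμ : (p.1, p.2) ∈ μ := μ.up_left_mem (by omega) (by omega) heμ
      have hple : T.entry (p.1, p.2) ≤ T.entry (e.1, e.2) := by
        rcases eq_or_lt_of_le (Nat.lt_succ_iff.1 hp1) with h | h
        · rw [h, hp2]
        · rw [hp2]; exact le_of_lt (T.col_lt h heμ)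
      have se := dOf_spec T he1 he2
      simp only [Finset.mem_filter, YoungDiagram.mem_cells]
      constructor
      · exact hpμ
      · have : T.entry (p.1, p.2) = T.entry p := rfl
        have : T.entry (e.1, e.2) = T.entry e := rfl
        omega
    calc ∑ e ∈ F, (e.1 + 1) = (F.biUnion g).card := hcard
      _ ≤ (μ.cells.filter (fun p => T.entry p ≤ d)).card := Finset.card_le_card hsub
      _ = d := card_le_entries T hd1 (by omega)
  have hmaj : T.maj = ∑ d ∈ D, d := by
    rw [SYT.maj, hD]
    rw [Finset.sum_filter]
  rw [hmaj, h1, h2]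
  exact Finset.sum_le_sum h3

end YD

/-- The minimum of the major index over `SYT(λ)` is `b(λ)`. -/
theorem min_maj_eq_bstat (μ : YoungDiagram) :
    IsLeast {m : ℕ | ∃ T : SYT μ, T.maj = m} (bstat μ) := by
  constructor
  · exact ⟨YD.Tmin μ, YD.maj_Tmin⟩
  · rintro m ⟨T, rfl⟩
    exact YD.bstat_le_maj T
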